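/- Let X be an n-element set with n even, and let g be a non-identity permutation of X fixing at least one point. Then the number of edge-parallelisms of the complete graph on X admitting g as an automorphism is at most n^{3n²/8}. -/

import Mathlib

/-- A perfect matching of the `n`-element set `Fin n`: a collection of
2-element subsets such that every point lies in exactly one of them. -/
def IsPerfectMatchingOn (n : ℕ) (M : Finset (Finset (Fin n))) : Prop :=
  (∀ e ∈ M, e.card = 2) ∧ ∀ x : Fin n, ∃! e, e ∈ M ∧ x ∈ e

/-- An edge-parallelism (1-factorisation) of the complete graph on `Fin n`:
a collection of parallel classes, each a perfect matching, such that every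
2-element subset of `Fin n` lies in exactly one class. -/
def IsOneFactorisation (n : ℕ) (P : Finset (Finset (Finset (Fin n)))) : Prop :=
  (∀ M ∈ P, IsPerfectMatchingOn n M) ∧
  ∀ e : Finset (Fin n), e.card = 2 → ∃! M, M ∈ P ∧ e ∈ M

/-- `g` is an automorphism of the edge-parallelism `P`: the image of every
parallel class is a parallel class. -/
def IsOneFactorisationAuto (n : ℕ) (P : Finset (Finset (Finset (Fin n))))
    (g : Equiv.Perm (Fin n)) : Prop :=
  ∀ M ∈ P, M.image (Finset.image g) ∈ P

open Finset

namespace OF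
variable {n : ℕ}

open Classical in
/-- the perfect matchings of the subset `S` of `Fin n` -/
noncomputable def matchings (n : ℕ) (S : Finset (Fin n)) : Finset (Finset (Finset (Fin n))) :=
  (S.powerset.powerset).filter (fun M =>
    (∀ e ∈ M, e.card = 2) ∧ ∀ x ∈ S, ∃! e, e ∈ M ∧ x ∈ e)

lemma mem_matchings {S : Finset (Fin n)} {M : Finset (Finset (Fin n))} :
    M ∈ matchings n S ↔ (∀ e ∈ M, e ⊆ S) ∧ (∀ e ∈ M, e.card = 2) ∧
      ∀ x ∈ S, ∃! e, e ∈ M ∧ x ∈ e := by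
  simp only [matchings, mem_filter, mem_powerset, and_assoc]
  constructor
  · rintro ⟨h1, h2⟩
    exact ⟨fun e he => mem_powerset.mp (h1 he), h2⟩
  · rintro ⟨h1, h2⟩
    exact ⟨fun e he => mem_powerset.mpr (h1 e he), h2⟩

/-- helper: an edge of cardinality 2 containing `a` is a pair -/
lemma pair_of_mem_card_two {e : Finset (Fin n)} {a : Fin n} (h2 : e.card = 2) (ha : a ∈ e) :
    ∃ b, b ≠ a ∧ e = {a, b} := by
  rcases Finset.card_eq_two.mp h2 with ⟨x, y, hxy, rfl⟩
  rcases Finset.mem_insert.mp ha with rfl | h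
  · exact ⟨y, hxy.symm, rfl⟩
  · rcases Finset.mem_singleton.mp h with rfl
    exact ⟨x, hxy, by rw [Finset.pair_comm]⟩

lemma card_matchings_le : ∀ (k : ℕ) (S : Finset (Fin n)), S.card = k →
    (matchings n S).card ≤ n ^ (k / 2) := by
  intro k
  induction k using Nat.strong_induction_on with
  | _ k ih =>
    intro S hS
    rcases S.eq_empty_or_nonempty with rfl | ⟨a, ha⟩
    · have hsub : matchings n ∅ ⊆ {(∅ : Finset (Finset (Fin n)))} := by
        intro M hM
        rw [mem_matchings] at hM
        simp only [mem_singleton]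
        by_contra hne
        obtain ⟨e, he⟩ := Finset.nonempty_iff_ne_empty.mpr hne
        have := hM.1 e he
        have h2 := hM.2.1 e he
        have : e = ∅ := Finset.subset_empty.mp this
        simp [this] at h2
      have hk0 : k = 0 := by simpa using hS.symm
      subst hk0
      calc (matchings n ∅).card ≤ _ := Finset.card_le_card hsub
        _ ≤ n ^ (0 / 2) := by simp
    · -- a ∈ S
      classical
      have hk1 : 1 ≤ k := hS ▸ Finset.card_pos.mpr ⟨a, ha⟩
      set F : Finset (Finset (Fin n)) → Fin n := fun M =>
        if h : ∃ b, b ∈ S.erase a ∧ ({a, b} : Finset (Fin n)) ∈ M then h.choose else a with hF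
      have hFspec : ∀ M ∈ matchings n S, F M ∈ S.erase a ∧ ({a, F M} : Finset (Fin n)) ∈ M := by
        intro M hM
        rw [mem_matchings] at hM
        obtain ⟨e, ⟨heM, hae⟩, -⟩ := hM.2.2 a ha
        obtain ⟨b, hba, rfl⟩ := pair_of_mem_card_two (hM.2.1 e heM) hae
        have hbS : b ∈ S := hM.1 _ heM (by simp)
        have hex : ∃ b, b ∈ S.erase a ∧ ({a, b} : Finset (Fin n)) ∈ M :=
          ⟨b, Finset.mem_erase.mpr ⟨hba, hbS⟩, heM⟩
        rw [hF]
        simp only [dif_pos hex]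
        exact hex.choose_spec
      have hcardsum : (matchings n S).card =
          ∑ b ∈ S.erase a, ((matchings n S).filter (fun M => F M = b)).card :=
        Finset.card_eq_sum_card_fiberwise (fun M hM => (hFspec M hM).1)
      have hfiber : ∀ b ∈ S.erase a,
          ((matchings n S).filter (fun M => F M = b)).card ≤ n ^ ((k - 2) / 2) := by
        intro b hb
        have hbne : b ≠ a := (Finset.mem_erase.mp hb).1
        have hbS : b ∈ S := (Finset.mem_erase.mp hb).2
        have hpair : ({a, b} : Finset (Fin n)) ⊆ S := by
          intro x hx; rcases Finset.mem_insert.mp hx with rfl | hx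
          · exact ha
          · rcases Finset.mem_singleton.mp hx with rfl; exact hbS
        have hScard : (S \ {a, b}).card = k - 2 := by
          rw [Finset.card_sdiff_of_subset hpair, Finset.card_pair (Ne.symm hbne), hS]
        have hstep : ((matchings n S).filter (fun M => F M = b)).card ≤
            (matchings n (S \ {a, b})).card := by
          apply Finset.card_le_card_of_injOn (fun M => M.erase {a, b})
          · intro M hM
            rw [Finset.mem_coe, Finset.mem_filter] at hM
            obtain ⟨hM1, hM2⟩ := hM
            have habM : ({a, b} : Finset (Fin n)) ∈ M := by
              have := (hFspec M hM1).2; rwa [hM2] at this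
            rw [mem_matchings] at hM1
            obtain ⟨hsub, hc2, hcov⟩ := hM1
            rw [Finset.mem_coe, mem_matchings]
            refine ⟨?_, fun e he => hc2 e (Finset.mem_of_mem_erase he), ?_⟩
            · intro e he
              have heM := Finset.mem_of_mem_erase he
              have hene : e ≠ {a, b} := Finset.ne_of_mem_erase he
              intro x hx
              rw [Finset.mem_sdiff]
              refine ⟨hsub e heM hx, ?_⟩
              intro hxab
              rcases Finset.mem_insert.mp hxab with rfl | hxb
              · obtain ⟨e', -, hu⟩ := hcov x ha
                have h1 := hu e ⟨heM, hx⟩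
                have h2 := hu {x, b} ⟨habM, by simp⟩
                exact hene (h1.trans h2.symm)
              · rcases Finset.mem_singleton.mp hxb with rfl
                obtain ⟨e', -, hu⟩ := hcov x hbS
                have h1 := hu e ⟨heM, hx⟩
                have h2 := hu {a, x} ⟨habM, by simp⟩
                exact hene (h1.trans h2.symm)
            · intro x hx
              rw [Finset.mem_sdiff] at hx
              obtain ⟨e, ⟨heM, hxe⟩, hu⟩ := hcov x hx.1
              have hene : e ≠ {a, b} := by
                rintro rfl; exact hx.2 hxe
              refine ⟨e, ⟨Finset.mem_erase.mpr ⟨hene, heM⟩, hxe⟩, ?_⟩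
              rintro e' ⟨he', hxe'⟩
              exact hu e' ⟨Finset.mem_of_mem_erase he', hxe'⟩
          · intro M hM M' hM' hMM'
            rw [Finset.mem_coe, Finset.mem_filter] at hM hM'
            have h1 : ({a, b} : Finset (Fin n)) ∈ M := by
              have := (hFspec M hM.1).2; rwa [hM.2] at this
            have h2 : ({a, b} : Finset (Fin n)) ∈ M' := by
              have := (hFspec M' hM'.1).2; rwa [hM'.2] at this
            have : insert ({a, b} : Finset (Fin n)) (M.erase {a, b}) =
                insert ({a, b} : Finset (Fin n)) (M'.erase {a, b}) := by
              dsimp only at hMM'; rw [hMM']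
            rwa [Finset.insert_erase h1, Finset.insert_erase h2] at this
        calc _ ≤ (matchings n (S \ {a, b})).card := hstep
          _ ≤ n ^ ((k - 2) / 2) := ih (k - 2) (by omega) _ hScard
      have hkn : k ≤ n := by
        rw [← hS]; simpa using Finset.card_le_card (Finset.subset_univ S)
      calc (matchings n S).card = _ := hcardsum
        _ ≤ ∑ _b ∈ S.erase a, n ^ ((k - 2) / 2) := Finset.sum_le_sum hfiber
        _ = (k - 1) * n ^ ((k - 2) / 2) := by
            rw [Finset.sum_const, Finset.card_erase_of_mem ha, hS, smul_eq_mul]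
        _ ≤ n ^ (k / 2) := by
            rcases Nat.lt_or_ge k 2 with hk2 | hk2
            · interval_cases k <;> simp
            · calc (k - 1) * n ^ ((k - 2) / 2) ≤ n * n ^ ((k - 2) / 2) :=
                  Nat.mul_le_mul_right _ (by omega)
                _ = n ^ ((k - 2) / 2 + 1) := by ring
                _ = n ^ (k / 2) := by congr 1; omega

noncomputable def orb (g : Equiv.Perm (Fin n)) (y : Fin n) : Finset (Fin n) :=
  (Finset.range (orderOf g)).image (fun k => (g ^ k) y)

lemma pow_mem_orb (g : Equiv.Perm (Fin n)) (y : Fin n) (k : ℕ) : (g ^ k) y ∈ orb g y := by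
  refine Finset.mem_image.mpr ⟨k % orderOf g, Finset.mem_range.mpr (Nat.mod_lt _ (orderOf_pos g)), ?_⟩
  rw [pow_mod_orderOf]

lemma self_mem_orb (g : Equiv.Perm (Fin n)) (y : Fin n) : y ∈ orb g y := by
  simpa using pow_mem_orb g y 0

lemma orb_eq_of_mem {g : Equiv.Perm (Fin n)} {y z : Fin n} (h : z ∈ orb g y) :
    orb g z = orb g y := by
  obtain ⟨j, hj, rfl⟩ := Finset.mem_image.mp h
  have hy : ((g ^ (orderOf g - j)) ((g ^ j) y)) = y := by
    rw [← Equiv.Perm.mul_apply, ← pow_add, Nat.sub_add_cancel (Finset.mem_range.mp hj).le,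
      pow_orderOf_eq_one]
    rfl
  apply Finset.Subset.antisymm
  · intro w hw
    obtain ⟨k, -, rfl⟩ := Finset.mem_image.mp hw
    rw [← Equiv.Perm.mul_apply, ← pow_add]
    exact pow_mem_orb g y (k + j)
  · intro w hw
    obtain ⟨k, -, rfl⟩ := Finset.mem_image.mp hw
    have : (g ^ k) y = (g ^ (k + (orderOf g - j))) ((g ^ j) y) := by
      rw [pow_add, Equiv.Perm.mul_apply, hy]
    rw [this]
    exact pow_mem_orb g _ _

lemma min'_congr' {α : Type*} [LinearOrder α] (s t : Finset α) (hs : s.Nonempty)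
    (ht : t.Nonempty) (h : s = t) : s.min' hs = t.min' ht := by subst h; rfl

noncomputable def rep (g : Equiv.Perm (Fin n)) (y : Fin n) : Fin n :=
  (orb g y).min' ⟨y, self_mem_orb g y⟩

lemma rep_mem (g : Equiv.Perm (Fin n)) (y : Fin n) : rep g y ∈ orb g y :=
  Finset.min'_mem _ _

lemma rep_eq_of_mem {g : Equiv.Perm (Fin n)} {y z : Fin n} (h : z ∈ orb g y) :
    rep g z = rep g y :=
  min'_congr' _ _ _ _ (orb_eq_of_mem h)

lemma exists_pow_rep (g : Equiv.Perm (Fin n)) (y : Fin n) : ∃ k, (g ^ k) (rep g y) = y := by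
  have : y ∈ orb g (rep g y) := by
    rw [orb_eq_of_mem (rep_mem g y)]; exact self_mem_orb g y
  obtain ⟨k, -, hk⟩ := Finset.mem_image.mp this
  exact ⟨k, hk⟩

lemma pow_apply_fixed {g : Equiv.Perm (Fin n)} {x : Fin n} (hx : g x = x) (k : ℕ) :
    (g ^ k) x = x := by
  induction k with
  | zero => rfl
  | succ k ih => rw [pow_succ, Equiv.Perm.mul_apply, hx, ih]

open Classical in
noncomputable def classOf (P : Finset (Finset (Finset (Fin n)))) (x₀ y : Fin n) :
    Finset (Finset (Fin n)) :=
  if h : ∃ M, M ∈ P ∧ ({x₀, y} : Finset (Fin n)) ∈ M then h.choose else ∅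

lemma classOf_spec {P : Finset (Finset (Finset (Fin n)))} (hP : IsOneFactorisation n P)
    {x₀ y : Fin n} (hy : y ≠ x₀) :
    classOf P x₀ y ∈ P ∧ ({x₀, y} : Finset (Fin n)) ∈ classOf P x₀ y := by
  have hcard : ({x₀, y} : Finset (Fin n)).card = 2 := Finset.card_pair (Ne.symm hy)
  obtain ⟨M, hM, -⟩ := hP.2 _ hcard
  have hex : ∃ M, M ∈ P ∧ ({x₀, y} : Finset (Fin n)) ∈ M := ⟨M, hM⟩
  unfold classOf
  rw [dif_pos hex]
  exact hex.choose_spec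

lemma classOf_unique {P : Finset (Finset (Finset (Fin n)))} (hP : IsOneFactorisation n P)
    {x₀ y : Fin n} (hy : y ≠ x₀) {M : Finset (Finset (Fin n))} (hM : M ∈ P)
    (he : ({x₀, y} : Finset (Fin n)) ∈ M) : M = classOf P x₀ y := by
  have hcard : ({x₀, y} : Finset (Fin n)).card = 2 := Finset.card_pair (Ne.symm hy)
  obtain ⟨M', -, hu⟩ := hP.2 _ hcard
  have h1 := hu M ⟨hM, he⟩
  have h2 := hu _ ⟨(classOf_spec hP hy).1, (classOf_spec hP hy).2⟩
  rw [h1, h2]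

end OF
open OF Finset in
/-- A non-identity permutation `g` of an `n`-element set (`n` even) fixing at
least one point is an automorphism of at most `n ^ (3n²/8)` edge-parallelisms
of the complete graph on that set. -/
theorem count_one_factorisations_fixed_by_perm_with_fixed_point (n : ℕ)
    (hn : Even n) (g : Equiv.Perm (Fin n)) (hg1 : g ≠ 1) (hfix : ∃ x, g x = x) :
    (Nat.card {P : Finset (Finset (Finset (Fin n))) //
        IsOneFactorisation n P ∧ IsOneFactorisationAuto n P g} : ℝ) ≤
      (n : ℝ) ^ (3 * (n : ℝ) ^ 2 / 8) := by
  classical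
  obtain ⟨x₀, hx₀⟩ := hfix
  rcases isEmpty_or_nonempty {P : Finset (Finset (Finset (Fin n))) //
      IsOneFactorisation n P ∧ IsOneFactorisationAuto n P g} with hemp | hne
  · rw [Nat.card_of_isEmpty]
    push_cast
    positivity
  obtain ⟨⟨P₀, hP₀⟩⟩ := hne
  have hn1 : 1 ≤ n := x₀.pos
  -- fixed and moved points
  set Fix : Finset (Fin n) := univ.filter (fun x : Fin n => g x = x) with hFixdef
  set Mov : Finset (Fin n) := univ.filter (fun x : Fin n => ¬ g x = x) with hMovdef
  set f := Fix.card with hfdef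
  set m := Mov.card with hmdef
  have hfm : f + m = n := by
    rw [hfdef, hmdef, hFixdef, hMovdef, Finset.card_filter_add_card_filter_not]
    simp
  have hx₀Fix : x₀ ∈ Fix := by simp [hFixdef, hx₀]
  have hf1 : 1 ≤ f := Finset.card_pos.mpr ⟨x₀, hx₀Fix⟩
  have hm1 : 1 ≤ m := by
    have hex : ∃ x, g x ≠ x := by
      by_contra h
      push_neg at h
      exact hg1 (Equiv.ext h)
    obtain ⟨x, hx⟩ := hex
    exact Finset.card_pos.mpr ⟨x, by simp [hMovdef, hx]⟩
  have hne_x₀ : ∀ y : Fin n, y ≠ x₀ → g y ≠ x₀ := by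
    intro y hy h
    exact hy (g.injective (h.trans hx₀.symm))
  -- STEP 1 : f ≤ m
  have hf_le_m : f ≤ m := by
    have hP₀fac := hP₀.1
    set E : Fin n → Finset (Finset (Fin n)) :=
      fun y => (classOf P₀ x₀ y).filter (fun e => e ⊆ Mov) with hEdef
    have hinv : ∀ y ∈ Fix.erase x₀,
        (classOf P₀ x₀ y).image (Finset.image g) = classOf P₀ x₀ y := by
      intro y hy
      obtain ⟨hyne, hyFix⟩ := Finset.mem_erase.mp hy
      have hgy : g y = y := by simpa [hFixdef] using hyFix
      obtain ⟨hc, he⟩ := classOf_spec hP₀fac hyne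
      have h1 := hP₀.2 _ hc
      have h2 : ({x₀, y} : Finset (Fin n)) ∈ (classOf P₀ x₀ y).image (Finset.image g) := by
        have := Finset.mem_image_of_mem (Finset.image g) he
        rwa [Finset.image_insert, Finset.image_singleton, hx₀, hgy] at this
      exact classOf_unique hP₀fac hyne h1 h2
    have hEcov : ∀ y ∈ Fix.erase x₀, ∀ v ∈ Mov, ∃ e ∈ E y, v ∈ e := by
      intro y hy v hv
      have hyne := (Finset.mem_erase.mp hy).1
      obtain ⟨hc, -⟩ := classOf_spec hP₀fac hyne
      have hmatch := hP₀fac.1 _ hc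
      obtain ⟨e, ⟨heM, hve⟩, -⟩ := hmatch.2 v
      obtain ⟨w, hwv, rfl⟩ := pair_of_mem_card_two (hmatch.1 e heM) hve
      have hvMov : g v ≠ v := by simpa [hMovdef] using hv
      have hwMov : g w ≠ w := by
        intro hgw
        have himg : ({v, w} : Finset (Fin n)).image g ∈ classOf P₀ x₀ y := by
          rw [← hinv y hy]
          exact Finset.mem_image_of_mem _ heM
        have hwmem : w ∈ ({v, w} : Finset (Fin n)).image g := by
          rw [Finset.image_insert, Finset.image_singleton, hgw]
          simp
        obtain ⟨e', ⟨he'M, hwe'⟩, hu'⟩ := hmatch.2 w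
        have h3 := hu' _ ⟨himg, hwmem⟩
        have h4 := hu' ({v, w} : Finset (Fin n)) ⟨heM, by simp⟩
        have himg_eq : ({v, w} : Finset (Fin n)).image g = {v, w} := h3.trans h4.symm
        have hvimg : v ∈ ({v, w} : Finset (Fin n)).image g := by rw [himg_eq]; simp
        obtain ⟨u, hu_mem, hgu⟩ := Finset.mem_image.mp hvimg
        rcases Finset.mem_insert.mp hu_mem with rfl | h
        · exact hvMov hgu
        · rcases Finset.mem_singleton.mp h with rfl
          exact hwv (hgw.symm.trans hgu)
      refine ⟨{v, w}, Finset.mem_filter.mpr ⟨heM, ?_⟩, by simp⟩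
      intro x hx
      rcases Finset.mem_insert.mp hx with rfl | h
      · exact hv
      · rcases Finset.mem_singleton.mp h with rfl
        simp [hMovdef, hwMov]
    have hEcard2 : ∀ y ∈ Fix.erase x₀, ∀ e ∈ E y, e.card = 2 := by
      intro y hy e he
      have hyne := (Finset.mem_erase.mp hy).1
      obtain ⟨hc, -⟩ := classOf_spec hP₀fac hyne
      exact (hP₀fac.1 _ hc).1 e (Finset.mem_filter.mp he).1
    have hEm : ∀ y ∈ Fix.erase x₀, m ≤ 2 * (E y).card := by
      intro y hy
      have hsub : Mov ⊆ (E y).biUnion id := by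
        intro v hv
        obtain ⟨e, he, hve⟩ := hEcov y hy v hv
        exact Finset.mem_biUnion.mpr ⟨e, he, hve⟩
      calc m ≤ ((E y).biUnion id).card := Finset.card_le_card hsub
        _ ≤ ∑ e ∈ E y, e.card := Finset.card_biUnion_le
        _ = ∑ _e ∈ E y, 2 := Finset.sum_congr rfl (hEcard2 y hy)
        _ = 2 * (E y).card := by rw [Finset.sum_const, smul_eq_mul, mul_comm]
    have hEdisj : ∀ y ∈ Fix.erase x₀, ∀ y' ∈ Fix.erase x₀, y ≠ y' →
        Disjoint (E y) (E y') := by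
      intro y hy y' hy' hne
      rw [Finset.disjoint_left]
      intro e he he'
      have hyne := (Finset.mem_erase.mp hy).1
      have hy'ne := (Finset.mem_erase.mp hy').1
      have hcM := (classOf_spec hP₀fac hyne).1
      have hcM' := (classOf_spec hP₀fac hy'ne).1
      have hcard2 : e.card = 2 := hEcard2 y hy e he
      obtain ⟨M', -, hu⟩ := hP₀fac.2 e hcard2
      have h1 := hu _ ⟨hcM, (Finset.mem_filter.mp he).1⟩
      have h2 := hu _ ⟨hcM', (Finset.mem_filter.mp he').1⟩
      have hMeq : classOf P₀ x₀ y = classOf P₀ x₀ y' := h1.trans h2.symm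
      have hmatch := hP₀fac.1 _ hcM
      obtain ⟨e0, -, hu0⟩ := hmatch.2 x₀
      have h3 := hu0 _ ⟨(classOf_spec hP₀fac hyne).2, by simp⟩
      have h4 := hu0 _ ⟨hMeq ▸ (classOf_spec hP₀fac hy'ne).2, by simp⟩
      have h5 : ({x₀, y} : Finset (Fin n)) = {x₀, y'} := h3.trans h4.symm
      have : y ∈ ({x₀, y'} : Finset (Fin n)) := h5 ▸ (by simp : y ∈ ({x₀, y} : Finset (Fin n)))
      rcases Finset.mem_insert.mp this with rfl | h
      · exact hyne rfl
      · exact hne (Finset.mem_singleton.mp h)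
    have hcount : (f - 1) * m ≤ m * (m - 1) := by
      have hcarderase : (Fix.erase x₀).card = f - 1 := by
        rw [Finset.card_erase_of_mem hx₀Fix]
      have h1 : (f - 1) * m ≤ ∑ y ∈ Fix.erase x₀, 2 * (E y).card := by
        calc (f - 1) * m = ∑ _y ∈ Fix.erase x₀, m := by
              rw [Finset.sum_const, smul_eq_mul, hcarderase]
          _ ≤ _ := Finset.sum_le_sum hEm
      have h2 : ∑ y ∈ Fix.erase x₀, (E y).card = ((Fix.erase x₀).biUnion E).card :=
        (Finset.card_biUnion hEdisj).symm
      have h3 : (Fix.erase x₀).biUnion E ⊆ Mov.powersetCard 2 := by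
        intro e he
        rw [Finset.mem_biUnion] at he
        obtain ⟨y, hy, he⟩ := he
        exact Finset.mem_powersetCard.mpr ⟨(Finset.mem_filter.mp he).2, hEcard2 y hy e he⟩
      have h4 : ((Fix.erase x₀).biUnion E).card ≤ m.choose 2 := by
        calc _ ≤ (Mov.powersetCard 2).card := Finset.card_le_card h3
          _ = m.choose 2 := by rw [Finset.card_powersetCard]
      have h5 : 2 * m.choose 2 ≤ m * (m - 1) := by
        rw [Nat.choose_two_right]
        generalize m * (m - 1) = t
        omega
      calc (f - 1) * m ≤ ∑ y ∈ Fix.erase x₀, 2 * (E y).card := h1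
        _ = 2 * ∑ y ∈ Fix.erase x₀, (E y).card := by rw [Finset.mul_sum]
        _ = 2 * ((Fix.erase x₀).biUnion E).card := by rw [h2]
        _ ≤ 2 * m.choose 2 := by omega
        _ ≤ m * (m - 1) := h5
    have : f - 1 ≤ m - 1 := by
      have h := hcount
      rw [mul_comm m (m - 1)] at h
      exact Nat.le_of_mul_le_mul_right h (by omega)
    omega
  -- STEP 2 : the representatives
  set R : Finset (Fin n) := (univ.erase x₀).image (rep g) with hRdef
  have hRne : ∀ r ∈ R, r ≠ x₀ := by
    intro r hr
    obtain ⟨y, hy, rfl⟩ := Finset.mem_image.mp hr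
    have hy0 : y ≠ x₀ := (Finset.mem_erase.mp hy).1
    obtain ⟨k, -, hk⟩ := Finset.mem_image.mp (rep_mem g y)
    intro h
    apply hy0
    have : (g ^ k) y = (g ^ k) x₀ := by rw [hk, h, pow_apply_fixed hx₀]
    exact (g ^ k).injective this
  have hRrep : ∀ r ∈ R, rep g r = r := by
    intro r hr
    obtain ⟨y, -, rfl⟩ := Finset.mem_image.mp hr
    exact rep_eq_of_mem (rep_mem g y)
  have horb_disj : ∀ r ∈ R, ∀ r' ∈ R, r ≠ r' →
      ∀ w, w ∈ orb g r → w ∈ orb g r' → False := by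
    intro r hr r' hr' hnrr w h1 h2
    apply hnrr
    rw [← hRrep r hr, ← hRrep r' hr', ← rep_eq_of_mem h1, ← rep_eq_of_mem h2]
  set Rfix : Finset (Fin n) := R.filter (fun r => g r = r) with hRfixdef
  set Rmov : Finset (Fin n) := R.filter (fun r => ¬ g r = r) with hRmovdef
  have hRsplit : Rfix.card + Rmov.card = R.card := by
    rw [hRfixdef, hRmovdef, Finset.card_filter_add_card_filter_not]
  have hRfixcard : Rfix.card ≤ f - 1 := by
    have hsub : Rfix ⊆ Fix.erase x₀ := by
      intro r hr
      rw [hRfixdef, Finset.mem_filter] at hr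
      exact Finset.mem_erase.mpr ⟨hRne r hr.1, by simp [hFixdef, hr.2]⟩
    calc Rfix.card ≤ (Fix.erase x₀).card := Finset.card_le_card hsub
      _ = f - 1 := Finset.card_erase_of_mem hx₀Fix
  have hRmovcard : 2 * Rmov.card ≤ m := by
    have hsubo : ∀ s : Fin n, ({s, g s} : Finset (Fin n)) ⊆ orb g s := by
      intro s w hw
      rcases Finset.mem_insert.mp hw with rfl | h
      · exact self_mem_orb g w
      · rcases Finset.mem_singleton.mp h with rfl
        have := pow_mem_orb g s 1
        rwa [pow_one] at this
    have hsub : Rmov.biUnion (fun r => ({r, g r} : Finset (Fin n))) ⊆ Mov := by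
      intro x hx
      rw [Finset.mem_biUnion] at hx
      obtain ⟨r, hr, hxr⟩ := hx
      rw [hRmovdef, Finset.mem_filter] at hr
      rcases Finset.mem_insert.mp hxr with rfl | h
      · simp [hMovdef, hr.2]
      · rcases Finset.mem_singleton.mp h with rfl
        simp only [hMovdef, Finset.mem_filter, Finset.mem_univ, true_and]
        intro hgg
        exact hr.2 (g.injective hgg)
    have hd : ∀ r ∈ Rmov, ∀ r' ∈ Rmov, r ≠ r' →
        Disjoint ({r, g r} : Finset (Fin n)) ({r', g r'} : Finset (Fin n)) := by
      intro r hr r' hr' hnrr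
      have hrR : r ∈ R := Finset.mem_of_mem_filter r hr
      have hr'R : r' ∈ R := Finset.mem_of_mem_filter r' hr'
      rw [Finset.disjoint_left]
      intro w hw hw'
      exact horb_disj r hrR r' hr'R hnrr w (hsubo r hw) (hsubo r' hw')
    calc 2 * Rmov.card = ∑ _r ∈ Rmov, 2 := by rw [Finset.sum_const, smul_eq_mul, mul_comm]
      _ = ∑ r ∈ Rmov, ({r, g r} : Finset (Fin n)).card := by
          refine Finset.sum_congr rfl (fun r hr => ?_)
          rw [hRmovdef, Finset.mem_filter] at hr
          rw [Finset.card_pair (Ne.symm hr.2)]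
      _ = (Rmov.biUnion (fun r => ({r, g r} : Finset (Fin n)))).card :=
          (Finset.card_biUnion hd).symm
      _ ≤ m := Finset.card_le_card hsub
  -- STEP 3 : the injection
  have hclass_matching : ∀ P : Finset (Finset (Finset (Fin n))),
      IsOneFactorisation n P → ∀ y : Fin n, y ≠ x₀ →
      classOf P x₀ y ∈ matchings n (univ : Finset (Fin n)) := by
    intro P hP y hy
    have h1 := (classOf_spec hP hy).1
    have h2 := hP.1 _ h1
    rw [mem_matchings]
    exact ⟨fun e _ => Finset.subset_univ e, h2.1, fun x _ => h2.2 x⟩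
  have hstep : ∀ P : Finset (Finset (Finset (Fin n))),
      IsOneFactorisation n P → IsOneFactorisationAuto n P g → ∀ y : Fin n, y ≠ x₀ →
      classOf P x₀ (g y) = (classOf P x₀ y).image (Finset.image g) := by
    intro P hPf hPa y hy
    obtain ⟨hc, he⟩ := classOf_spec hPf hy
    have h1 := hPa _ hc
    have h2 : ({x₀, g y} : Finset (Fin n)) ∈ (classOf P x₀ y).image (Finset.image g) := by
      have := Finset.mem_image_of_mem (Finset.image g) he
      rwa [Finset.image_insert, Finset.image_singleton, hx₀] at this
    exact (classOf_unique hPf (hne_x₀ y hy) h1 h2).symm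
  have hiter : ∀ P Q : Finset (Finset (Finset (Fin n))),
      IsOneFactorisation n P → IsOneFactorisationAuto n P g →
      IsOneFactorisation n Q → IsOneFactorisationAuto n Q g →
      ∀ y : Fin n, y ≠ x₀ → classOf P x₀ y = classOf Q x₀ y →
      ∀ k : ℕ, classOf P x₀ ((g ^ k) y) = classOf Q x₀ ((g ^ k) y) := by
    intro P Q hPf hPa hQf hQa y hy h0 k
    induction k with
    | zero => simpa using h0
    | succ k ih =>
      have hz : (g ^ k) y ≠ x₀ := by
        intro h
        apply hy
        have : (g ^ k) y = (g ^ k) x₀ := by rw [h, pow_apply_fixed hx₀]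
        exact (g ^ k).injective this
      have hrw : (g ^ (k + 1)) y = g ((g ^ k) y) := by
        rw [pow_succ', Equiv.Perm.mul_apply]
      rw [hrw, hstep P hPf hPa _ hz, hstep Q hQf hQa _ hz, ih]
  have hcard_bound : Nat.card {P : Finset (Finset (Finset (Fin n))) //
      IsOneFactorisation n P ∧ IsOneFactorisationAuto n P g} ≤
      n ^ ((n / 2) * R.card) := by
    set T := {P : Finset (Finset (Finset (Fin n))) //
      IsOneFactorisation n P ∧ IsOneFactorisationAuto n P g} with hTdef
    have hinj2 : Function.Injective (fun (P : T) (r : {r // r ∈ R}) =>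
        (⟨classOf P.1 x₀ r.1, hclass_matching P.1 P.2.1 r.1 (hRne r.1 r.2)⟩ :
          {M // M ∈ matchings n (univ : Finset (Fin n))})) := by
      intro P Q hPQ
      apply Subtype.ext
      have hag : ∀ r ∈ R, classOf P.1 x₀ r = classOf Q.1 x₀ r := by
        intro r hr
        have := congrFun hPQ ⟨r, hr⟩
        simpa using congrArg Subtype.val this
      have hag2 : ∀ y : Fin n, y ≠ x₀ → classOf P.1 x₀ y = classOf Q.1 x₀ y := by
        intro y hy
        have hrR : rep g y ∈ R :=
          Finset.mem_image_of_mem _ (Finset.mem_erase.mpr ⟨hy, Finset.mem_univ y⟩)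
        obtain ⟨k, hk⟩ := exists_pow_rep g y
        rw [← hk]
        exact hiter P.1 Q.1 P.2.1 P.2.2 Q.2.1 Q.2.2 (rep g y) (hRne _ hrR) (hag _ hrR) k
      have hdir : ∀ P' Q' : T, (∀ y : Fin n, y ≠ x₀ →
          classOf P'.1 x₀ y = classOf Q'.1 x₀ y) → ∀ M ∈ P'.1, M ∈ Q'.1 := by
        intro P' Q' hag' M hM
        have hmatch := P'.2.1.1 M hM
        obtain ⟨e, ⟨heM, hxe⟩, -⟩ := hmatch.2 x₀
        obtain ⟨y, hy, rfl⟩ := pair_of_mem_card_two (hmatch.1 e heM) hxe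
        have h1 := classOf_unique P'.2.1 hy hM heM
        rw [hag' y hy] at h1
        rw [h1]
        exact (classOf_spec Q'.2.1 hy).1
      ext M
      exact ⟨hdir P Q hag2 M, hdir Q P (fun y hy => (hag2 y hy).symm) M⟩
    calc Nat.card T ≤ Nat.card ({r // r ∈ R} → {M // M ∈ matchings n (univ : Finset (Fin n))}) :=
          Nat.card_le_card_of_injective _ hinj2
      _ = (matchings n (univ : Finset (Fin n))).card ^ R.card := by
          rw [Nat.card_fun]
          simp [Nat.card_eq_fintype_card]
      _ ≤ (n ^ (n / 2)) ^ R.card := by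
          refine Nat.pow_le_pow_left ?_ _
          exact card_matchings_le n univ (by simp)
      _ = n ^ ((n / 2) * R.card) := by rw [← pow_mul]
  -- STEP 4 : arithmetic
  have hRc : ((R.card : ℕ) : ℝ) ≤ 3 * (n : ℝ) / 4 := by
    have c2 : ((Rfix.card : ℕ) : ℝ) ≤ (f : ℝ) - 1 := by
      calc ((Rfix.card : ℕ) : ℝ) ≤ ((f - 1 : ℕ) : ℝ) := Nat.cast_le.mpr hRfixcard
        _ = (f : ℝ) - 1 := by
          rw [Nat.cast_sub hf1]; simp
    have c3 : 2 * ((Rmov.card : ℕ) : ℝ) ≤ (m : ℝ) := by exact_mod_cast hRmovcard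
    have c4 : (f : ℝ) ≤ (m : ℝ) := Nat.cast_le.mpr hf_le_m
    have c5 : (f : ℝ) + (m : ℝ) = (n : ℝ) := by exact_mod_cast hfm
    have c7 : ((R.card : ℕ) : ℝ) = ((Rfix.card : ℕ) : ℝ) + ((Rmov.card : ℕ) : ℝ) := by
      exact_mod_cast hRsplit.symm
    linarith
  have hexp : (((n / 2) * R.card : ℕ) : ℝ) ≤ 3 * (n : ℝ) ^ 2 / 8 := by
    have c1 : ((n / 2 : ℕ) : ℝ) ≤ (n : ℝ) / 2 := Nat.cast_div_le
    have c0 : (0 : ℝ) ≤ ((n / 2 : ℕ) : ℝ) := Nat.cast_nonneg _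
    have cR0 : (0 : ℝ) ≤ ((R.card : ℕ) : ℝ) := Nat.cast_nonneg _
    have cn0 : (0 : ℝ) ≤ (n : ℝ) := Nat.cast_nonneg _
    push_cast
    nlinarith [mul_le_mul c1 hRc cR0 (by linarith : (0:ℝ) ≤ (n : ℝ) / 2)]
  calc (Nat.card {P : Finset (Finset (Finset (Fin n))) //
        IsOneFactorisation n P ∧ IsOneFactorisationAuto n P g} : ℝ)
      ≤ ((n ^ ((n / 2) * R.card) : ℕ) : ℝ) := Nat.cast_le.mpr hcard_bound
    _ = (n : ℝ) ^ ((((n / 2) * R.card : ℕ)) : ℝ) := by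
        rw [Real.rpow_natCast]
        push_cast
        ring
    _ ≤ (n : ℝ) ^ (3 * (n : ℝ) ^ 2 / 8) :=
        Real.rpow_le_rpow_of_exponent_le (by exact_mod_cast hn1) hexp
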